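/- Under the stated assumptions, the ℓ¹ norm of the lane-exchange source vector does not increase under the relaxation step: for every ρ ∈ ∏_{j=1}^M [0,R_j], one has ∑_{j=1}^M |g_j(T(ρ))| ≤ ∑_{j=1}^M |g_j(ρ)|. (This is the key telescoping estimate ∑_j g_{j,i}^+ ≤ ∑_j g_{j,i}^− in the proof of Lemma 2.5, giving the time-Lipschitz estimate for the approximate solutions.) -/

import Mathlib

open Set

/-- Mean value representation: the increment of a differentiable function with
derivative bounds on an interval is a slope in the bound interval times the increment. -/
lemma slope_rep (f : ℝ → ℝ) (hf : Differentiable ℝ f) {lo hi m M' : ℝ}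
    (hd : ∀ c ∈ Icc lo hi, deriv f c ∈ Icc m M')
    {x y : ℝ} (hx : x ∈ Icc lo hi) (hy : y ∈ Icc lo hi) :
    ∃ a ∈ Icc m M', f y - f x = a * (y - x) := by
  rcases lt_trichotomy x y with h | h | h
  · obtain ⟨c, hc, hderiv⟩ := exists_deriv_eq_slope f h (hf.continuous.continuousOn)
      (hf.differentiableOn)
    refine ⟨deriv f c, hd c ⟨le_trans hx.1 hc.1.le, le_trans hc.2.le hy.2⟩, ?_⟩
    rw [hderiv, div_mul_cancel₀ _ (sub_ne_zero.2 h.ne')]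
  · refine ⟨m, ⟨le_rfl, le_trans (hd x hx).1 (hd x hx).2⟩, ?_⟩
    rw [h]; ring
  · obtain ⟨c, hc, hderiv⟩ := exists_deriv_eq_slope f h (hf.continuous.continuousOn)
      (hf.differentiableOn)
    refine ⟨deriv f c, hd c ⟨le_trans hy.1 hc.1.le, le_trans hc.2.le hx.2⟩, ?_⟩
    rw [hderiv, div_mul_eq_mul_div, eq_div_iff (sub_ne_zero.2 h.ne')]
    ring

/-- Telescoping sum over `Finset.Icc 1 M`. -/
lemma telescope_Icc (F : ℕ → ℝ) (M : ℕ) :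
    ∑ j ∈ Finset.Icc 1 M, (F j - F (j - 1)) = F M - F 0 := by
  induction M with
  | zero => simp
  | succ n ih =>
    rw [Finset.sum_Icc_succ_top (by omega : 1 ≤ n + 1), ih]
    simp

set_option maxHeartbeats 1600000 in
/-- Key telescoping estimate in the proof of Lemma 2.5: the ℓ¹ norm of the
lane-exchange source vector does not increase under the relaxation step. -/
theorem relaxation_step_source_nonincreasing
(M : ℕ) (hM : 1 ≤ M)
    (R : ℕ → ℝ) (hR : ∀ j, 1 ≤ j → j ≤ M → 0 < R j)
    (𝒮 τ Δt : ℝ) (h𝒮 : 0 < 𝒮) (hτ : 0 < τ) (hΔt : 0 < Δt)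
    (hΔtτ : Δt ≤ τ / (2 * 𝒮))
    (S : ℕ → ℝ → ℝ → ℝ)
    (hS0 : ∀ u w, S 0 u w = 0)
    (hSM : ∀ u w, S M u w = 0)
    (hSC1 : ∀ j, 1 ≤ j → j ≤ M - 1 → ContDiff ℝ 1 (Function.uncurry (S j)))
    (hS1 : ∀ j, 1 ≤ j → j ≤ M - 1 → ∀ u ∈ Icc (0:ℝ) (R j), ∀ w ∈ Icc (0:ℝ) (R (j+1)),
      deriv (fun u' => S j u' w) u ∈ Icc (0:ℝ) 𝒮)
    (hS2 : ∀ j, 1 ≤ j → j ≤ M - 1 → ∀ u ∈ Icc (0:ℝ) (R j), ∀ w ∈ Icc (0:ℝ) (R (j+1)),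
      deriv (fun w' => S j u w') w ∈ Icc (-𝒮) (0:ℝ))
    (hS00 : ∀ j, 1 ≤ j → j ≤ M - 1 → S j 0 0 = 0)
    (hSRR : ∀ j, 1 ≤ j → j ≤ M - 1 → S j (R j) (R (j+1)) = 0)
    (g : (ℕ → ℝ) → ℕ → ℝ)
    (hg : ∀ ρ j, g ρ j = S (j-1) (ρ (j-1)) (ρ j) - S j (ρ j) (ρ (j+1)))
    (T : (ℕ → ℝ) → ℕ → ℝ)
    (hT : ∀ ρ j, T ρ j = ρ j + (Δt / τ) * g ρ j)
    (ρ : ℕ → ℝ) (hρ : ∀ j, 1 ≤ j → j ≤ M → ρ j ∈ Icc (0:ℝ) (R j)) :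
    ∑ j ∈ Finset.Icc 1 M, |g (T ρ) j| ≤ ∑ j ∈ Finset.Icc 1 M, |g ρ j| := by
  set κ := Δt / τ with hκdef
  have hκ0 : 0 < κ := div_pos hΔt hτ
  have hκ2𝒮 : κ * (2 * 𝒮) ≤ 1 := by
    rw [hκdef, div_mul_eq_mul_div, div_le_one hτ]
    calc Δt * (2 * 𝒮) ≤ (τ / (2 * 𝒮)) * (2 * 𝒮) :=
          mul_le_mul_of_nonneg_right hΔtτ (by positivity)
      _ = τ := by field_simp
  -- differentiability of the partial maps
  have hdiff1 : ∀ j, 1 ≤ j → j ≤ M - 1 → ∀ w : ℝ, Differentiable ℝ (fun u => S j u w) := by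
    intro j h1 h2 w
    exact ((hSC1 j h1 h2).differentiable one_ne_zero).comp
      ((differentiable_id : Differentiable ℝ (fun u : ℝ => u)).prodMk (differentiable_const w))
  have hdiff2 : ∀ j, 1 ≤ j → j ≤ M - 1 → ∀ u : ℝ, Differentiable ℝ (fun w => S j u w) := by
    intro j h1 h2 u
    exact ((hSC1 j h1 h2).differentiable one_ne_zero).comp
      ((differentiable_const u).prodMk (differentiable_id : Differentiable ℝ (fun w : ℝ => w)))
  -- box bounds for S j
  have hSb : ∀ j, 1 ≤ j → j ≤ M - 1 → ∀ u ∈ Icc (0:ℝ) (R j), ∀ w ∈ Icc (0:ℝ) (R (j+1)),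
      -(𝒮 * w) ≤ S j u w ∧ -(𝒮 * (R j - u)) ≤ S j u w ∧ S j u w ≤ 𝒮 * u ∧
        S j u w ≤ 𝒮 * (R (j+1) - w) := by
    intro j h1 h2 u hu w hw
    have hRj : 0 < R j := hR j h1 (by omega)
    have hRj1 : 0 < R (j+1) := hR (j+1) (by omega) (by omega)
    have h0j : (0:ℝ) ∈ Icc (0:ℝ) (R j) := ⟨le_rfl, hRj.le⟩
    have hRjm : R j ∈ Icc (0:ℝ) (R j) := ⟨hRj.le, le_rfl⟩
    have h0j1 : (0:ℝ) ∈ Icc (0:ℝ) (R (j+1)) := ⟨le_rfl, hRj1.le⟩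
    have hRj1m : R (j+1) ∈ Icc (0:ℝ) (R (j+1)) := ⟨hRj1.le, le_rfl⟩
    obtain ⟨a1, ha1, e1⟩ := slope_rep (fun u' => S j u' w) (hdiff1 j h1 h2 w)
      (fun c hc => hS1 j h1 h2 c hc w hw) h0j hu
    obtain ⟨a2, ha2, e2⟩ := slope_rep (fun w' => S j 0 w') (hdiff2 j h1 h2 0)
      (fun c hc => hS2 j h1 h2 0 h0j c hc) h0j1 hw
    obtain ⟨a3, ha3, e3⟩ := slope_rep (fun u' => S j u' w) (hdiff1 j h1 h2 w)
      (fun c hc => hS1 j h1 h2 c hc w hw) hRjm hu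
    obtain ⟨a4, ha4, e4⟩ := slope_rep (fun w' => S j (R j) w') (hdiff2 j h1 h2 (R j))
      (fun c hc => hS2 j h1 h2 (R j) hRjm c hc) hRj1m hw
    obtain ⟨a5, ha5, e5⟩ := slope_rep (fun w' => S j u w') (hdiff2 j h1 h2 u)
      (fun c hc => hS2 j h1 h2 u hu c hc) h0j1 hw
    obtain ⟨a6, ha6, e6⟩ := slope_rep (fun u' => S j u' 0) (hdiff1 j h1 h2 0)
      (fun c hc => hS1 j h1 h2 c hc 0 h0j1) h0j hu
    obtain ⟨a7, ha7, e7⟩ := slope_rep (fun w' => S j u w') (hdiff2 j h1 h2 u)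
      (fun c hc => hS2 j h1 h2 u hu c hc) hRj1m hw
    obtain ⟨a8, ha8, e8⟩ := slope_rep (fun u' => S j u' (R (j+1))) (hdiff1 j h1 h2 (R (j+1)))
      (fun c hc => hS1 j h1 h2 c hc (R (j+1)) hRj1m) hRjm hu
    have h00 := hS00 j h1 h2
    have hRR := hSRR j h1 h2
    refine ⟨?_, ?_, ?_, ?_⟩
    · -- -(𝒮 w) ≤ S j u w : via e5 (S u w - S u 0 = a5 w) and e6 (S u 0 - S 0 0 = a6 u)
      have p5 : -(𝒮 * w) ≤ a5 * w := by
        have := mul_le_mul_of_nonneg_right ha5.1 hw.1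
        nlinarith
      have p6 : 0 ≤ a6 * u := mul_nonneg ha6.1 hu.1
      linarith
    · -- -(𝒮 (R j - u)) ≤ S j u w : via e3 (S u w - S (R j) w = a3 (u - R j)) and
      -- e4 (S (R j) w - S (R j) (R (j+1)) = a4 (w - R (j+1)))
      have p3 : -(𝒮 * (R j - u)) ≤ a3 * (u - R j) := by
        nlinarith [mul_le_mul_of_nonneg_right ha3.2 (sub_nonneg.2 hu.2)]
      have p4 : 0 ≤ a4 * (w - R (j+1)) := by
        nlinarith [mul_le_mul_of_nonneg_right ha4.2 (sub_nonneg.2 hw.2)]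
      linarith
    · -- S j u w ≤ 𝒮 u : via e1 (S u w - S 0 w = a1 u) and e2 (S 0 w - S 0 0 = a2 w)
      have p1 : a1 * u ≤ 𝒮 * u := mul_le_mul_of_nonneg_right ha1.2 hu.1
      have p2 : a2 * w ≤ 0 := mul_nonpos_of_nonpos_of_nonneg ha2.2 hw.1
      linarith
    · -- S j u w ≤ 𝒮 (R (j+1) - w) : via e7 (S u w - S u (R (j+1)) = a7 (w - R (j+1)))
      -- and e8 (S u (R (j+1)) - S (R j) (R (j+1)) = a8 (u - R j))
      have p7 : a7 * (w - R (j+1)) ≤ 𝒮 * (R (j+1) - w) := by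
        nlinarith [mul_le_mul_of_nonneg_right ha7.1 (sub_nonneg.2 hw.2)]
      have p8 : a8 * (u - R j) ≤ 0 := by
        nlinarith [mul_le_mul_of_nonneg_right ha8.1 (sub_nonneg.2 hu.2)]
      linarith
  -- bounds on g ρ j
  have hgb : ∀ j, 1 ≤ j → j ≤ M → -(2 * 𝒮 * ρ j) ≤ g ρ j ∧ g ρ j ≤ 2 * 𝒮 * (R j - ρ j) := by
    intro j h1 h2
    have hρj := hρ j h1 h2
    have hterm1 : -(𝒮 * ρ j) ≤ S (j-1) (ρ (j-1)) (ρ j) ∧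
        S (j-1) (ρ (j-1)) (ρ j) ≤ 𝒮 * (R j - ρ j) := by
      rcases eq_or_lt_of_le h1 with h | h
      · have hj0 : j - 1 = 0 := by omega
        rw [hj0, hS0]
        constructor
        · nlinarith [hρj.1]
        · nlinarith [hρj.2]
      · have hj1 : 1 ≤ j - 1 := by omega
        have hj2 : j - 1 ≤ M - 1 := by omega
        have hji : j - 1 + 1 = j := by omega
        have hρj1 := hρ (j-1) hj1 (by omega)
        have := hSb (j-1) hj1 hj2 (ρ (j-1)) hρj1 (ρ j) (by rw [hji]; exact hρj)
        rw [hji] at this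
        exact ⟨this.1, this.2.2.2⟩
    have hterm2 : -(𝒮 * (R j - ρ j)) ≤ S j (ρ j) (ρ (j+1)) ∧
        S j (ρ j) (ρ (j+1)) ≤ 𝒮 * ρ j := by
      rcases eq_or_lt_of_le h2 with h | h
      · rw [h, hSM]
        constructor
        · rw [← h]; nlinarith [hρj.2]
        · rw [← h]; nlinarith [hρj.1]
      · have hj2 : j ≤ M - 1 := by omega
        have hρj1 := hρ (j+1) (by omega) (by omega)
        have := hSb j h1 hj2 (ρ j) hρj (ρ (j+1)) hρj1
        exact ⟨this.2.1, this.2.2.1⟩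
    rw [hg]
    constructor
    · linarith [hterm1.1, hterm2.2]
    · linarith [hterm1.2, hterm2.1]
  -- invariance of the box under T
  have hTmem : ∀ j, 1 ≤ j → j ≤ M → T ρ j ∈ Icc (0:ℝ) (R j) := by
    intro j h1 h2
    have hρj := hρ j h1 h2
    obtain ⟨hgl, hgu⟩ := hgb j h1 h2
    rw [hT]
    constructor
    · have hA : κ * -(2 * 𝒮 * ρ j) ≤ κ * g ρ j := mul_le_mul_of_nonneg_left hgl hκ0.le
      have hB : κ * (2 * 𝒮) * ρ j ≤ 1 * ρ j := mul_le_mul_of_nonneg_right hκ2𝒮 hρj.1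
      have hC : κ * -(2 * 𝒮 * ρ j) = -(κ * (2 * 𝒮) * ρ j) := by ring
      linarith
    · have hA : κ * g ρ j ≤ κ * (2 * 𝒮 * (R j - ρ j)) := mul_le_mul_of_nonneg_left hgu hκ0.le
      have hB : κ * (2 * 𝒮) * (R j - ρ j) ≤ 1 * (R j - ρ j) :=
        mul_le_mul_of_nonneg_right hκ2𝒮 (by linarith [hρj.2])
      have hC : κ * (2 * 𝒮 * (R j - ρ j)) = κ * (2 * 𝒮) * (R j - ρ j) := by ring
      linarith
  -- mean value representation for the update of each S j
  have H : ∀ j, ∃ a b : ℝ, a ∈ Icc (0:ℝ) 𝒮 ∧ b ∈ Icc (0:ℝ) 𝒮 ∧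
      (j ≤ M → S j (T ρ j) (T ρ (j+1)) - S j (ρ j) (ρ (j+1)) =
        a * (T ρ j - ρ j) - b * (T ρ (j+1) - ρ (j+1))) ∧
      ((j = 0 ∨ M ≤ j) → a = 0 ∧ b = 0) := by
    intro j
    by_cases hj : 1 ≤ j ∧ j ≤ M - 1
    · obtain ⟨hj1, hj2⟩ := hj
      have hρj := hρ j hj1 (by omega)
      have hρj1 := hρ (j+1) (by omega) (by omega)
      have hTj := hTmem j hj1 (by omega)
      have hTj1 := hTmem (j+1) (by omega) (by omega)
      obtain ⟨a, haI, hae⟩ := slope_rep (fun u => S j u (T ρ (j+1))) (hdiff1 j hj1 hj2 _)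
        (fun c hc => hS1 j hj1 hj2 c hc _ hTj1) hρj hTj
      obtain ⟨b', hbI, hbe⟩ := slope_rep (fun w => S j (ρ j) w) (hdiff2 j hj1 hj2 _)
        (fun c hc => hS2 j hj1 hj2 _ hρj c hc) hρj1 hTj1
      refine ⟨a, -b', haI, ⟨neg_nonneg.2 hbI.2, by linarith [hbI.1]⟩, fun _ => ?_,
        fun h => absurd h (by omega)⟩
      linear_combination hae + hbe
    · refine ⟨0, 0, ⟨le_rfl, h𝒮.le⟩, ⟨le_rfl, h𝒮.le⟩, fun hjM => ?_, fun _ => ⟨rfl, rfl⟩⟩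
      have hj0M : j = 0 ∨ j = M := by omega
      rcases hj0M with h | h <;> simp [h, hS0, hSM]
  choose a b haI hbI heq hzero using H
  have hTd : ∀ k, T ρ k - ρ k = κ * g ρ k := fun k => by rw [hT ρ k]; ring
  -- per-index estimate
  have perj : ∀ j ∈ Finset.Icc 1 M, |g (T ρ) j| ≤ |g ρ j| +
      ((κ * a (j-1) * |g ρ (j-1)| - κ * a j * |g ρ j|) +
       (κ * b j * |g ρ (j+1)| - κ * b (j-1) * |g ρ j|)) := by
    intro j hj
    rw [Finset.mem_Icc] at hj
    obtain ⟨hj1, hjM⟩ := hj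
    have hji : j - 1 + 1 = j := by omega
    have e1 := heq (j-1) (by omega)
    rw [hji] at e1
    have e2 := heq j hjM
    simp only [hTd] at e1 e2
    have key : g (T ρ) j = (1 - κ * (b (j-1) + a j)) * g ρ j +
        κ * a (j-1) * g ρ (j-1) + κ * b j * g ρ (j+1) := by
      linear_combination hg (T ρ) j - hg ρ j + e1 - e2
    have hc1 : 0 ≤ 1 - κ * (b (j-1) + a j) := by
      have h1 : κ * (b (j-1) + a j) ≤ κ * (2 * 𝒮) := by
        apply mul_le_mul_of_nonneg_left _ hκ0.le
        linarith [(hbI (j-1)).2, (haI j).2]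
      linarith
    have hca : 0 ≤ κ * a (j-1) := mul_nonneg hκ0.le (haI (j-1)).1
    have hcb : 0 ≤ κ * b j := mul_nonneg hκ0.le (hbI j).1
    calc |g (T ρ) j| = |(1 - κ * (b (j-1) + a j)) * g ρ j +
          κ * a (j-1) * g ρ (j-1) + κ * b j * g ρ (j+1)| := by rw [key]
      _ ≤ |(1 - κ * (b (j-1) + a j)) * g ρ j| + |κ * a (j-1) * g ρ (j-1)| +
          |κ * b j * g ρ (j+1)| := abs_add_three _ _ _
      _ = (1 - κ * (b (j-1) + a j)) * |g ρ j| + κ * a (j-1) * |g ρ (j-1)| +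
          κ * b j * |g ρ (j+1)| := by
            simp only [abs_mul, abs_of_nonneg hκ0.le, abs_of_nonneg (haI (j-1)).1,
              abs_of_nonneg (haI j).1, abs_of_nonneg (hbI j).1, abs_of_nonneg hc1]
      _ = |g ρ j| + ((κ * a (j-1) * |g ρ (j-1)| - κ * a j * |g ρ j|) +
          (κ * b j * |g ρ (j+1)| - κ * b (j-1) * |g ρ j|)) := by ring
  -- telescoping sums vanish
  have ha0 : a 0 = 0 := (hzero 0 (Or.inl rfl)).1
  have haM : a M = 0 := (hzero M (Or.inr le_rfl)).1
  have hb0 : b 0 = 0 := (hzero 0 (Or.inl rfl)).2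
  have hbM : b M = 0 := (hzero M (Or.inr le_rfl)).2
  have sumA : ∑ j ∈ Finset.Icc 1 M,
      (κ * a (j-1) * |g ρ (j-1)| - κ * a j * |g ρ j|) = 0 := by
    have hcong : ∀ j ∈ Finset.Icc 1 M,
        κ * a (j-1) * |g ρ (j-1)| - κ * a j * |g ρ j| =
        (fun k => -(κ * a k * |g ρ k|)) j - (fun k => -(κ * a k * |g ρ k|)) (j-1) := by
      intro j hj
      ring
    rw [Finset.sum_congr rfl hcong, telescope_Icc]
    simp [ha0, haM]
  have sumB : ∑ j ∈ Finset.Icc 1 M,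
      (κ * b j * |g ρ (j+1)| - κ * b (j-1) * |g ρ j|) = 0 := by
    have hcong : ∀ j ∈ Finset.Icc 1 M,
        κ * b j * |g ρ (j+1)| - κ * b (j-1) * |g ρ j| =
        (fun k => κ * b k * |g ρ (k+1)|) j - (fun k => κ * b k * |g ρ (k+1)|) (j-1) := by
      intro j hj
      rw [Finset.mem_Icc] at hj
      have hji : j - 1 + 1 = j := by omega
      simp only [hji]
    rw [Finset.sum_congr rfl hcong, telescope_Icc]
    simp [hb0, hbM]
  calc ∑ j ∈ Finset.Icc 1 M, |g (T ρ) j|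
      ≤ ∑ j ∈ Finset.Icc 1 M, (|g ρ j| +
        ((κ * a (j-1) * |g ρ (j-1)| - κ * a j * |g ρ j|) +
         (κ * b j * |g ρ (j+1)| - κ * b (j-1) * |g ρ j|))) := Finset.sum_le_sum perj
    _ = ∑ j ∈ Finset.Icc 1 M, |g ρ j| +
        (∑ j ∈ Finset.Icc 1 M, (κ * a (j-1) * |g ρ (j-1)| - κ * a j * |g ρ j|) +
         ∑ j ∈ Finset.Icc 1 M, (κ * b j * |g ρ (j+1)| - κ * b (j-1) * |g ρ j|)) := by
          rw [Finset.sum_add_distrib, Finset.sum_add_distrib]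
    _ = ∑ j ∈ Finset.Icc 1 M, |g ρ j| := by rw [sumA, sumB]; ring
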